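/- Let G be a 2-connected matching-covered bipartite graph with bipartition X ⊔ Y. Assume that for every non-edge (x,y) ∈ X × Y there exists a tight subset S ⊆ Y with y ∈ S and x ∉ N_G(S). Let A ⊆ X be an acceptable set. Then for every x ∈ A there exists a tight subset R ⊆ A with x ∈ R. -/

import Mathlib

attribute [local instance] Classical.propDecidable

/-- `X ⊔ Y` is a bipartition of the graph `G`. -/
def IsBipartition {V : Type*} (G : SimpleGraph V) [Fintype V] (X Y : Finset V) : Prop :=
  Disjoint X Y ∧ X ∪ Y = Finset.univ ∧
    ∀ x y : V, G.Adj x y → (x ∈ X ∧ y ∈ Y) ∨ (x ∈ Y ∧ y ∈ X)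

/-- `G` is connected and every edge of `G` lies in a perfect matching. -/
def MatchingCovered {V : Type*} (G : SimpleGraph V) : Prop :=
  G.Connected ∧ ∀ e ∈ G.edgeSet, ∃ M : G.Subgraph, M.IsPerfectMatching ∧ e ∈ M.edgeSet

/-- `G` is connected and remains connected after deleting any single vertex. -/
def TwoConnected {V : Type*} (G : SimpleGraph V) : Prop :=
  G.Connected ∧ ∀ v : V, (G.induce {u : V | u ≠ v}).Connected

/-- The neighborhood of the vertex set `A` in `G`. -/
noncomputable def nbhd {V : Type*} [Fintype V] (G : SimpleGraph V) (A : Finset V) : Finset V :=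
  Finset.univ.filter (fun y => ∃ x ∈ A, G.Adj x y)

/-- `T` is a tight subset: `|N_G(T)| = |T| + 1`. -/
def Tight {V : Type*} [Fintype V] (G : SimpleGraph V) (T : Finset V) : Prop :=
  (nbhd G T).card = T.card + 1

/-- `T ⊆ X` is an acceptable set of the bipartite graph `G` with bipartition `X ⊔ Y`:
the graph induced by the edges between `T` and `N_G(T)` is connected, and the induced
subgraph on `(X \ T) ⊔ (Y \ N_G(T))` is connected with at least one edge. -/
def Acceptable {V : Type*} [Fintype V] (G : SimpleGraph V) (X Y T : Finset V) : Prop :=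
  T.Nonempty ∧ T ⊆ X ∧
    (G.induce (↑(T ∪ nbhd G T) : Set V)).Connected ∧
    (G.induce (↑((X \ T) ∪ (Y \ nbhd G T)) : Set V)).Connected ∧
    ∃ x ∈ X \ T, ∃ y ∈ Y \ nbhd G T, G.Adj x y

section Helpers


variable {V : Type*} [Fintype V] {G : SimpleGraph V} {X Y : Finset V}

lemma mem_nbhd {A : Finset V} {y : V} : y ∈ nbhd G A ↔ ∃ x ∈ A, G.Adj x y := by
  simp [nbhd]

lemma nbhd_mono {A B : Finset V} (h : A ⊆ B) : nbhd G A ⊆ nbhd G B := by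
  intro y hy
  rw [mem_nbhd] at *
  obtain ⟨x, hx, hadj⟩ := hy
  exact ⟨x, h hx, hadj⟩

lemma nbhd_union (G : SimpleGraph V) (S T : Finset V) :
    nbhd G (S ∪ T) = nbhd G S ∪ nbhd G T := by
  ext y
  simp only [mem_nbhd, Finset.mem_union]
  constructor
  · rintro ⟨x, hx | hx, hadj⟩
    · exact Or.inl ⟨x, hx, hadj⟩
    · exact Or.inr ⟨x, hx, hadj⟩
  · rintro (⟨x, hx, hadj⟩ | ⟨x, hx, hadj⟩)
    · exact ⟨x, Or.inl hx, hadj⟩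
    · exact ⟨x, Or.inr hx, hadj⟩

lemma Tight.nonempty {T : Finset V} (h : Tight G T) : T.Nonempty := by
  by_contra hne
  rw [Finset.not_nonempty_iff_eq_empty] at hne
  subst hne
  have : nbhd G (∅ : Finset V) = ∅ := by
    ext y; simp [mem_nbhd]
  simp [Tight, this] at h

lemma IsBipartition.symm (h : IsBipartition G X Y) : IsBipartition G Y X :=
  ⟨h.1.symm, by rw [Finset.union_comm]; exact h.2.1,
    fun x y hadj => (h.2.2 x y hadj).symm⟩

lemma IsBipartition.adj_right (h : IsBipartition G X Y) {x y : V} (hx : x ∈ X)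
    (hadj : G.Adj x y) : y ∈ Y := by
  rcases h.2.2 x y hadj with ⟨_, hy⟩ | ⟨hx', _⟩
  · exact hy
  · exact absurd hx' (Finset.disjoint_left.mp h.1 hx)

lemma IsBipartition.not_adj (h : IsBipartition G X Y) {x y : V} (hx : x ∈ X)
    (hy : y ∈ X) (hadj : G.Adj x y) : False :=
  Finset.disjoint_left.mp h.1 hy (h.adj_right hx hadj)

lemma nbhd_subset_of_subset (h : IsBipartition G X Y) {S : Finset V} (hS : S ⊆ X) :
    nbhd G S ⊆ Y := by
  intro y hy
  obtain ⟨x, hx, hadj⟩ := mem_nbhd.mp hy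
  exact h.adj_right (hS hx) hadj

/-- crossing edge along a walk -/
lemma walk_cross {W : Type*} {H : SimpleGraph W} {p : W → Prop} :
    ∀ {u v : W}, H.Walk u v → p u → ¬ p v → ∃ a b, H.Adj a b ∧ p a ∧ ¬ p b := by
  intro u v w
  induction w with
  | nil => intro hu hv; exact absurd hu hv
  | @cons a b c h q ih =>
    intro hu hv
    by_cases hp : p b
    · exact ih hp hv
    · exact ⟨a, b, h, hu, hp⟩

lemma reachable_cross {W : Type*} {H : SimpleGraph W} {p : W → Prop} {u v : W}
    (hr : H.Reachable u v) (hu : p u) (hv : ¬ p v) :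
    ∃ a b, H.Adj a b ∧ p a ∧ ¬ p b := by
  obtain ⟨w⟩ := hr
  exact walk_cross w hu hv

lemma exists_neighbor {W : Type*} {H : SimpleGraph W} (hc : H.Connected) {a b : W}
    (hab : H.Adj a b) (v : W) : ∃ u, H.Adj v u := by
  rcases eq_or_ne a v with rfl | hne
  · exact ⟨b, hab⟩
  · obtain ⟨x, y, hxy, hx, hy⟩ := reachable_cross (p := fun u => u = v)
      (hc.preconnected v a) rfl hne
    exact ⟨y, hx ▸ hxy⟩

end Helpers

section Hall


variable {V : Type*} [Fintype V] {G : SimpleGraph V} {X Y : Finset V}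

/-- The partner function of a perfect matching. -/
noncomputable def pfun {M : G.Subgraph} (hM : M.IsPerfectMatching) (v : V) : V :=
  ((SimpleGraph.Subgraph.isPerfectMatching_iff.mp hM) v).exists.choose

lemma pfun_adj {M : G.Subgraph} (hM : M.IsPerfectMatching) (v : V) :
    M.Adj v (pfun hM v) :=
  ((SimpleGraph.Subgraph.isPerfectMatching_iff.mp hM) v).exists.choose_spec

lemma pfun_unique {M : G.Subgraph} (hM : M.IsPerfectMatching) {v w : V}
    (h : M.Adj v w) : w = pfun hM v := by
  obtain ⟨u, _, hu⟩ := (SimpleGraph.Subgraph.isPerfectMatching_iff.mp hM) v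
  rw [hu w h, hu (pfun hM v) (pfun_adj hM v)]

lemma pfun_injOn {M : G.Subgraph} (hM : M.IsPerfectMatching) {s : Finset V} :
    Set.InjOn (pfun hM) ↑s := by
  intro u hu u' hu' h
  have h1 : M.Adj (pfun hM u) u := (pfun_adj hM u).symm
  have h2 : M.Adj (pfun hM u) u' := h ▸ (pfun_adj hM u').symm
  rw [pfun_unique hM h1, pfun_unique hM h2]

lemma card_bipartition (hbip : IsBipartition G X Y) {M : G.Subgraph}
    (hM : M.IsPerfectMatching) : X.card = Y.card := by
  have key : ∀ (P Q : Finset V), IsBipartition G P Q → P.card ≤ Q.card := by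
    intro P Q hPQ
    apply Finset.card_le_card_of_injOn (pfun hM)
    · intro a ha
      exact hPQ.adj_right ha (M.adj_sub (pfun_adj hM a))
    · exact pfun_injOn hM
  exact le_antisymm (key X Y hbip) (key Y X hbip.symm)

/-- Strict Hall property for subsets of `X`. -/
lemma strict_hall (hbip : IsBipartition G X Y) (hmc : MatchingCovered G)
    {T : Finset V} (hTX : T ⊆ X) (hTne : T.Nonempty) (hTX' : T ≠ X) :
    T.card + 1 ≤ (nbhd G T).card := by
  -- find x' ∈ X \ T
  obtain ⟨x', hx'X, hx'T⟩ := Finset.exists_of_ssubset (hTX.ssubset_of_ne hTX')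
  obtain ⟨t, ht⟩ := hTne
  -- crossing edge out of T ∪ nbhd T
  have hpx' : ¬ x' ∈ T ∪ nbhd G T := by
    rw [Finset.mem_union]
    rintro (h | h)
    · exact hx'T h
    · exact Finset.disjoint_left.mp hbip.1 hx'X (nbhd_subset_of_subset hbip hTX h)
  obtain ⟨a, b, hadj, hpa, hpb⟩ := reachable_cross (p := fun u => u ∈ T ∪ nbhd G T)
    (hmc.1.preconnected t x') (Finset.mem_union_left _ ht) hpx'
  rw [Finset.mem_union] at hpa
  rcases hpa with haT | haN
  · exact absurd (Finset.mem_union_right _ (mem_nbhd.mpr ⟨a, haT, hadj⟩)) hpb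
  -- a ∈ nbhd T ⊆ Y, b ∈ X \ T
  have haY : a ∈ Y := nbhd_subset_of_subset hbip hTX haN
  have hbX : b ∈ X := hbip.symm.adj_right haY hadj
  have hbT : b ∉ T := fun h => hpb (Finset.mem_union_left _ h)
  -- get a perfect matching through the edge ab
  obtain ⟨M, hM, heM⟩ := hmc.2 s(a, b) (G.mem_edgeSet.mpr hadj)
  have hMab : M.Adj a b := SimpleGraph.Subgraph.mem_edgeSet.mp heM
  -- inject T into (nbhd T).erase a
  have hinj : T.card ≤ ((nbhd G T).erase a).card := by
    apply Finset.card_le_card_of_injOn (pfun hM)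
    · intro u hu
      rw [Finset.mem_coe, Finset.mem_erase]
      constructor
      · intro heq
        have h1 : M.Adj a u := heq ▸ (pfun_adj hM u).symm
        have : u = b := by rw [pfun_unique hM h1, pfun_unique hM hMab]
        exact hbT (this ▸ hu)
      · exact mem_nbhd.mpr ⟨u, hu, M.adj_sub (pfun_adj hM u)⟩
    · exact pfun_injOn hM
  have haN' : a ∈ nbhd G T := haN
  have := Finset.card_erase_of_mem haN'
  have hpos : 1 ≤ (nbhd G T).card := Finset.card_pos.mpr ⟨a, haN'⟩
  omega

end Hall

theorem stmt12aux {V : Type*} [Fintype V] (G : SimpleGraph V) (X Y : Finset V)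
    (hbip : IsBipartition G X Y) (hmc : MatchingCovered G)
    (hsep : ∀ x ∈ X, ∀ y ∈ Y, ¬ G.Adj x y →
      ∃ S : Finset V, S ⊆ Y ∧ Tight G S ∧ y ∈ S ∧ x ∉ nbhd G S)
    (A : Finset V) (hA : Acceptable G X Y A) :
    ∀ x ∈ A, ∃ R : Finset V, R ⊆ A ∧ Tight G R ∧ x ∈ R := by
  intro x hx
  obtain ⟨hAne, hAX, -, hconn, x₀, hx₀, y₀, hy₀, hadjxy⟩ := hA
  set B : Finset V := Y \ nbhd G A with hBdef
  have hxX : x ∈ X := hAX hx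
  have hBY : B ⊆ Y := Finset.sdiff_subset
  have hy₀B : y₀ ∈ B := hy₀
  -- x has a neighbor
  have hxnbr : ∃ w, G.Adj x w := exists_neighbor hmc.1 hadjxy x
  -- vertices of A are not adjacent to B
  have hnoadjB : ∀ b ∈ B, ¬ G.Adj x b := by
    intro b hb hadj
    exact (Finset.mem_sdiff.mp hb).2 (mem_nbhd.mpr ⟨x, hx, hadj⟩)
  -- hall for both sides
  have hallX : ∀ T : Finset V, T ⊆ X → T.Nonempty → T ≠ X →
      T.card + 1 ≤ (nbhd G T).card := fun T h1 h2 h3 => strict_hall hbip hmc h1 h2 h3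
  have hallY : ∀ T : Finset V, T ⊆ Y → T.Nonempty → T ≠ Y →
      T.card + 1 ≤ (nbhd G T).card := fun T h1 h2 h3 => strict_hall hbip.symm hmc h1 h2 h3
  -- a set avoided by x is not all of Y
  have hneY : ∀ S : Finset V, x ∉ nbhd G S → S ⊆ Y → S ≠ Y := by
    intro S hxS hSY heq
    obtain ⟨w, hw⟩ := hxnbr
    exact hxS (mem_nbhd.mpr ⟨w, heq ▸ hbip.adj_right hxX hw, hw.symm⟩)
  -- uncrossing
  have uncross : ∀ S T : Finset V, S ⊆ Y → T ⊆ Y → Tight G S → Tight G T →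
      (nbhd G S ∩ nbhd G T).Nonempty → x ∉ nbhd G S → x ∉ nbhd G T →
      Tight G (S ∪ T) := by
    intro S T hSY hTY htS htT hint hxS hxT
    have hxST : x ∉ nbhd G (S ∪ T) := by
      rw [nbhd_union, Finset.mem_union]; rintro (h | h) <;> [exact hxS h; exact hxT h]
    have hSTne : (S ∪ T) ≠ Y := hneY _ hxST (Finset.union_subset hSY hTY)
    have hSne : S ≠ Y := hneY _ hxS hSY
    have hlow : (S ∪ T).card + 1 ≤ (nbhd G (S ∪ T)).card :=
      hallY _ (Finset.union_subset hSY hTY) (htS.nonempty.mono Finset.subset_union_left) hSTne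
    have hcard1 : (nbhd G S ∪ nbhd G T).card + (nbhd G S ∩ nbhd G T).card
        = (nbhd G S).card + (nbhd G T).card := Finset.card_union_add_card_inter _ _
    have hcard2 : (S ∪ T).card + (S ∩ T).card = S.card + T.card :=
      Finset.card_union_add_card_inter _ _
    have hintlow : (S ∩ T).card + 1 ≤ (nbhd G S ∩ nbhd G T).card := by
      rcases Finset.eq_empty_or_nonempty (S ∩ T) with he | hne
      · rw [he]; simpa using Finset.card_pos.mpr hint
      · have h1 : nbhd G (S ∩ T) ⊆ nbhd G S ∩ nbhd G T := by
          intro y hy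
          exact Finset.mem_inter.mpr ⟨nbhd_mono Finset.inter_subset_left hy,
            nbhd_mono Finset.inter_subset_right hy⟩
        have h2 := hallY (S ∩ T) (Finset.inter_subset_left.trans hSY) hne
          (fun h => hSne (Finset.eq_of_subset_of_card_le hSY
            (by rw [← h]; exact Finset.card_le_card Finset.inter_subset_left)))
        exact le_trans h2 (Finset.card_le_card h1)
    have hnu : nbhd G (S ∪ T) = nbhd G S ∪ nbhd G T := nbhd_union G S T
    unfold Tight at *
    rw [hnu] at hlow ⊢
    omega
  -- every vertex of X \ A has a neighbor in B
  have hXA : ∀ x' ∈ X \ A, x' ∈ nbhd G B := by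
    intro x' hx'
    have hx'mem : x' ∈ (↑((X \ A) ∪ (Y \ nbhd G A)) : Set V) := by
      simp only [Finset.coe_union, Set.mem_union, Finset.mem_coe]
      exact Or.inl hx'
    have hx₀mem : x₀ ∈ (↑((X \ A) ∪ (Y \ nbhd G A)) : Set V) := by
      simp only [Finset.coe_union, Set.mem_union, Finset.mem_coe]
      exact Or.inl hx₀
    have hy₀mem : y₀ ∈ (↑((X \ A) ∪ (Y \ nbhd G A)) : Set V) := by
      simp only [Finset.coe_union, Set.mem_union, Finset.mem_coe]
      exact Or.inr hy₀
    have hedge : (G.induce (↑((X \ A) ∪ (Y \ nbhd G A)) : Set V)).Adj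
        ⟨x₀, hx₀mem⟩ ⟨y₀, hy₀mem⟩ := hadjxy
    obtain ⟨u, hu⟩ := exists_neighbor hconn hedge ⟨x', hx'mem⟩
    have hadj' : G.Adj x' ↑u := hu
    have humem := u.2
    simp only [Finset.coe_union, Set.mem_union, Finset.mem_coe] at humem
    rcases humem with h | h
    · exact absurd hadj' (fun hadj'' =>
        hbip.not_adj (Finset.mem_sdiff.mp hx').1 (Finset.mem_sdiff.mp h).1 hadj'')
    · exact mem_nbhd.mpr ⟨↑u, h, hadj'.symm⟩
  -- growing tight sets to contain B
  have grow : ∀ n : ℕ, ∀ S : Finset V, S ⊆ Y → Tight G S → (S ∩ B).Nonempty →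
      x ∉ nbhd G S → (B \ S).card ≤ n →
      ∃ S' : Finset V, S' ⊆ Y ∧ Tight G S' ∧ B ⊆ S' ∧ x ∉ nbhd G S' := by
    intro n
    induction n with
    | zero =>
      intro S hSY htS hSB hxS hle
      have : B ⊆ S := by
        rw [← Finset.sdiff_eq_empty_iff_subset]
        exact Finset.card_eq_zero.mp (Nat.le_zero.mp hle)
      exact ⟨S, hSY, htS, this, hxS⟩
    | succ n ih =>
      intro S hSY htS hSB hxS hle
      by_cases hBS : B ⊆ S
      · exact ⟨S, hSY, htS, hBS, hxS⟩
      -- find an element of B outside S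
      obtain ⟨b₁, hb₁B, hb₁S⟩ := Finset.not_subset.mp hBS
      obtain ⟨c, hc⟩ := hSB
      have hcS : c ∈ S := (Finset.mem_inter.mp hc).1
      have hcB : c ∈ B := (Finset.mem_inter.mp hc).2
      -- crossing edge in the induced graph
      have hcmem : c ∈ (↑((X \ A) ∪ (Y \ nbhd G A)) : Set V) := by
        simp only [Finset.coe_union, Set.mem_union, Finset.mem_coe]
        exact Or.inr hcB
      have hb₁mem : b₁ ∈ (↑((X \ A) ∪ (Y \ nbhd G A)) : Set V) := by
        simp only [Finset.coe_union, Set.mem_union, Finset.mem_coe]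
        exact Or.inr hb₁B
      have hr := hconn.preconnected ⟨c, hcmem⟩ ⟨b₁, hb₁mem⟩
      set p : (↑((X \ A) ∪ (Y \ nbhd G A)) : Set V) → Prop :=
        fun u => (↑u ∈ S ∩ B) ∨ (↑u ∈ X \ A ∧ ↑u ∈ nbhd G S) with hpdef
      have hpc : p ⟨c, hcmem⟩ := Or.inl hc
      have hpb₁ : ¬ p ⟨b₁, hb₁mem⟩ := by
        rintro (h | ⟨h, -⟩)
        · exact hb₁S (Finset.mem_inter.mp h).1
        · exact Finset.disjoint_left.mp hbip.1 (Finset.mem_sdiff.mp h).1 (hBY hb₁B)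
      obtain ⟨a, b', hadj, hpa, hpb'⟩ := reachable_cross hr hpc hpb₁
      have hadjG : G.Adj ↑a ↑b' := hadj
      have hb'mem := b'.2
      simp only [Finset.coe_union, Set.mem_union, Finset.mem_coe] at hb'mem
      rcases hpa with haSB | ⟨haXA, haNS⟩
      · -- a ∈ S ∩ B ⊆ Y; b' must be in X \ A and hence in nbhd S : contradiction
        exfalso
        have haY : (↑a : V) ∈ Y := hBY (Finset.mem_inter.mp haSB).2
        rcases hb'mem with h | h
        · exact hpb' (Or.inr ⟨h, mem_nbhd.mpr
            ⟨↑a, (Finset.mem_inter.mp haSB).1, hadjG⟩⟩)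
        · exact hbip.symm.not_adj haY (hBY h) hadjG
      · -- a ∈ (X \ A) ∩ nbhd S ; b' ∈ B \ S
        have haX : (↑a : V) ∈ X := (Finset.mem_sdiff.mp haXA).1
        have hb'B : (↑b' : V) ∈ B := by
          rcases hb'mem with h | h
          · exact absurd hadjG (fun hh => hbip.not_adj haX (Finset.mem_sdiff.mp h).1 hh)
          · exact h
        have hb'S : (↑b' : V) ∉ S := fun hh =>
          hpb' (Or.inl (Finset.mem_inter.mpr ⟨hh, hb'B⟩))
        -- get a tight set through b'
        obtain ⟨S₂, hS₂Y, htS₂, hb'S₂, hxS₂⟩ :=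
          hsep x hxX ↑b' (hBY hb'B) (hnoadjB ↑b' hb'B)
        have hint : (nbhd G S ∩ nbhd G S₂).Nonempty :=
          ⟨↑a, Finset.mem_inter.mpr ⟨haNS, mem_nbhd.mpr ⟨↑b', hb'S₂, hadjG.symm⟩⟩⟩
        have htU : Tight G (S ∪ S₂) := uncross S S₂ hSY hS₂Y htS htS₂ hint hxS hxS₂
        have hxU : x ∉ nbhd G (S ∪ S₂) := by
          rw [nbhd_union, Finset.mem_union]; rintro (h | h) <;> [exact hxS h; exact hxS₂ h]
        have hUB : ((S ∪ S₂) ∩ B).Nonempty :=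
          ⟨c, Finset.mem_inter.mpr ⟨Finset.mem_union_left _ hcS, hcB⟩⟩
        have hdec : (B \ (S ∪ S₂)).card < (B \ S).card := by
          apply Finset.card_lt_card
          rw [Finset.ssubset_iff_of_subset
            (Finset.sdiff_subset_sdiff le_rfl Finset.subset_union_left)]
          exact ⟨↑b', Finset.mem_sdiff.mpr ⟨hb'B, hb'S⟩,
            fun hh => (Finset.mem_sdiff.mp hh).2 (Finset.mem_union_right _ hb'S₂)⟩
        exact ih (S ∪ S₂) (Finset.union_subset hSY hS₂Y) htU hUB hxU (by omega)
  -- base tight set through y₀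
  obtain ⟨S₀, hS₀Y, htS₀, hy₀S₀, hxS₀⟩ := hsep x hxX y₀ (hBY hy₀B) (hnoadjB y₀ hy₀B)
  obtain ⟨S, hSY, htS, hBS, hxS⟩ := grow (B \ S₀).card S₀ hS₀Y htS₀
    ⟨y₀, Finset.mem_inter.mpr ⟨hy₀S₀, hy₀B⟩⟩ hxS₀ le_rfl
  -- the complement tight set
  set R : Finset V := X \ nbhd G S with hRdef
  have hNSX : nbhd G S ⊆ X := nbhd_subset_of_subset hbip.symm hSY
  have hxR : x ∈ R := Finset.mem_sdiff.mpr ⟨hxX, hxS⟩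
  have hRA : R ⊆ A := by
    intro r hr
    rw [Finset.mem_sdiff] at hr
    by_contra hrA
    exact hr.2 (nbhd_mono hBS (hXA r (Finset.mem_sdiff.mpr ⟨hr.1, hrA⟩)))
  have hNR : nbhd G R ⊆ Y \ S := by
    intro w hw
    obtain ⟨r, hrR, hadj⟩ := mem_nbhd.mp hw
    rw [Finset.mem_sdiff] at hrR
    refine Finset.mem_sdiff.mpr ⟨hbip.adj_right (hrR.1) hadj, fun hwS => ?_⟩
    exact hrR.2 (mem_nbhd.mpr ⟨w, hwS, hadj.symm⟩)
  -- cardinalities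
  have hXY : X.card = Y.card := by
    obtain ⟨M, hM, -⟩ := hmc.2 s(x₀, y₀) (G.mem_edgeSet.mpr hadjxy)
    exact card_bipartition hbip hM
  have hc1 : R.card + (nbhd G S).card = X.card := Finset.card_sdiff_add_card_eq_card hNSX
  have hc2 : (Y \ S).card + S.card = Y.card := Finset.card_sdiff_add_card_eq_card hSY
  have hc3 : (nbhd G R).card ≤ (Y \ S).card := Finset.card_le_card hNR
  have hRX : R ≠ X := by
    intro h
    have : x₀ ∈ R := h ▸ (Finset.mem_sdiff.mp hx₀).1
    exact (Finset.mem_sdiff.mp hx₀).2 (hRA this)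
  have hlow : R.card + 1 ≤ (nbhd G R).card :=
    hallX R Finset.sdiff_subset ⟨x, hxR⟩ hRX
  have htScard : (nbhd G S).card = S.card + 1 := htS
  refine ⟨R, hRA, ?_, hxR⟩
  unfold Tight
  omega


theorem stmt12 {V : Type*} [Fintype V] (G : SimpleGraph V) (X Y : Finset V)
    (hbip : IsBipartition G X Y) (hmc : MatchingCovered G) (h2 : TwoConnected G)
    (hsep : ∀ x ∈ X, ∀ y ∈ Y, ¬ G.Adj x y →
      ∃ S : Finset V, S ⊆ Y ∧ Tight G S ∧ y ∈ S ∧ x ∉ nbhd G S)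
    (A : Finset V) (hA : Acceptable G X Y A) :
    ∀ x ∈ A, ∃ R : Finset V, R ⊆ A ∧ Tight G R ∧ x ∈ R :=
  stmt12aux G X Y hbip hmc hsep A hA
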